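/- Let ℓ : ℝ^d → ℝ be convex and G-Lipschitz and let r > 0. Then the r-smoothing ℓ̂ is differentiable on ℝ^d and its gradient is (G√d/r)-Lipschitz: ‖∇ℓ̂(u) − ∇ℓ̂(v)‖ ≤ (G√d/r)·‖u − v‖ for all u, v ∈ ℝ^d. -/

import Mathlib

open MeasureTheory

/-- The uniform probability measure on the closed Euclidean ball of radius `r`
centered at the origin in `ℝ^d`. -/
noncomputable def uniformBall (d : ℕ) (r : ℝ) : Measure (EuclideanSpace ℝ (Fin d)) :=
  (volume (Metric.closedBall (0 : EuclideanSpace ℝ (Fin d)) r))⁻¹ •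
    volume.restrict (Metric.closedBall (0 : EuclideanSpace ℝ (Fin d)) r)

/-- The `r`-smoothing of `ℓ`: the average of `ℓ` over the ball of radius `r` around the point. -/
noncomputable def smoothed {d : ℕ} (ℓ : EuclideanSpace ℝ (Fin d) → ℝ) (r : ℝ)
    (θ : EuclideanSpace ℝ (Fin d)) : ℝ :=
  ∫ y, ℓ (θ + y) ∂(uniformBall d r)

namespace Stmt9Aux

open Real Metric
open scoped RealInnerProductSpace

lemma gamma_midpoint (x : ℝ) (hx : 0 < x) :
    Gamma (x+1) ≤ Real.sqrt (x+1/2) * Gamma (x+1/2) := by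
  have h1 : (0:ℝ) < x + 1/2 := by linarith
  have h2 : (0:ℝ) < x + 3/2 := by linarith
  have hmid := convexOn_log_Gamma.2 (Set.mem_Ioi.2 h1) (Set.mem_Ioi.2 h2)
    (by norm_num : (0:ℝ) ≤ 1/2) (by norm_num : (0:ℝ) ≤ 1/2) (by norm_num)
  have hx1 : (1/2 : ℝ) • (x+1/2) + (1/2 : ℝ) • (x+3/2) = x + 1 := by
    simp only [smul_eq_mul]; ring
  rw [hx1] at hmid
  simp only [Function.comp, smul_eq_mul] at hmid
  have hg1 : 0 < Gamma (x+1/2) := Gamma_pos_of_pos h1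
  have hg3 : 0 < Gamma (x+1) := Gamma_pos_of_pos (by linarith)
  have h32 : Gamma (x+3/2) = (x+1/2) * Gamma (x+1/2) := by
    have := Gamma_add_one (ne_of_gt h1)
    rw [show x + 3/2 = x + 1/2 + 1 by ring, this]
  have hrhs : 0 < Real.sqrt (x+1/2) * Gamma (x+1/2) :=
    mul_pos (Real.sqrt_pos.2 h1) hg1
  rw [← Real.log_le_log_iff hg3 hrhs, Real.log_mul (by positivity) (ne_of_gt hg1),
    Real.log_sqrt h1.le]
  rw [h32, Real.log_mul (ne_of_gt h1) (ne_of_gt hg1)] at hmid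
  linarith

lemma gammaIneq (n : ℕ) :
    2 * Gamma (((n:ℝ)+1)/2 + 1) ≤ Real.sqrt ((n:ℝ)+1) * Real.sqrt π * Gamma ((n:ℝ)/2 + 1) := by
  rcases Nat.eq_zero_or_pos n with rfl | hn
  · norm_num
    rw [show (3/2:ℝ) = 1/2 + 1 by norm_num, Gamma_add_one (by norm_num), Gamma_one_half_eq]
    ring_nf
    rfl
  · have hx : (0:ℝ) < ((n:ℝ)+1)/2 := by positivity
    have key := gamma_midpoint (((n:ℝ)+1)/2) hx
    have e1 : ((n:ℝ)+1)/2 + 1/2 = (n:ℝ)/2 + 1 := by ring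
    rw [e1] at key
    have hπ : (3:ℝ) < π := pi_gt_three
    have h2 : 2 * Real.sqrt ((n:ℝ)/2 + 1) ≤ Real.sqrt ((n:ℝ)+1) * Real.sqrt π := by
      rw [← Real.sqrt_mul (by positivity)]
      rw [show (2:ℝ) * Real.sqrt ((n:ℝ)/2+1) = Real.sqrt (4 * ((n:ℝ)/2+1)) by
        rw [Real.sqrt_mul (by norm_num), show (4:ℝ) = 2^2 by norm_num, Real.sqrt_sq (by norm_num)]]
      apply Real.sqrt_le_sqrt
      have hn1 : (1:ℝ) ≤ (n:ℝ) := by exact_mod_cast hn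
      nlinarith
    have hg : 0 < Gamma ((n:ℝ)/2 + 1) := Gamma_pos_of_pos (by positivity)
    calc 2 * Gamma (((n:ℝ)+1)/2 + 1) ≤ 2 * (Real.sqrt ((n:ℝ)/2+1) * Gamma ((n:ℝ)/2+1)) := by
          linarith
      _ = (2 * Real.sqrt ((n:ℝ)/2+1)) * Gamma ((n:ℝ)/2+1) := by ring
      _ ≤ (Real.sqrt ((n:ℝ)+1) * Real.sqrt π) * Gamma ((n:ℝ)/2+1) := by
          exact mul_le_mul_of_nonneg_right h2 hg.le

noncomputable def uBV (n : ℕ) : ℝ := Real.sqrt π ^ n / Real.Gamma ((n:ℝ)/2 + 1)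

lemma uBV_pos (n : ℕ) : 0 < uBV n :=
  div_pos (pow_pos (Real.sqrt_pos.2 pi_pos) n) (Gamma_pos_of_pos (by positivity))

lemma two_uBV_le (n : ℕ) : 2 * uBV n ≤ Real.sqrt ((n:ℝ)+1) * uBV (n+1) := by
  have hb : 0 < Gamma ((n:ℝ)/2 + 1) := Gamma_pos_of_pos (by positivity)
  have hd : 0 < Gamma ((((n:ℕ):ℝ)+1)/2 + 1) := Gamma_pos_of_pos (by positivity)
  have hcast : (((n+1 : ℕ)):ℝ)/2 + 1 = (((n:ℕ):ℝ)+1)/2 + 1 := by push_cast; ring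
  unfold uBV
  rw [hcast, ← mul_div_assoc, ← mul_div_assoc, div_le_div_iff₀ hb hd]
  have key := gammaIneq n
  have ha : (0:ℝ) ≤ Real.sqrt π ^ n := by positivity
  have := mul_le_mul_of_nonneg_left key ha
  calc 2 * Real.sqrt π ^ n * Gamma (((n:ℝ)+1)/2 + 1)
      = Real.sqrt π ^ n * (2 * Gamma (((n:ℝ)+1)/2 + 1)) := by ring
    _ ≤ Real.sqrt π ^ n * (Real.sqrt ((n:ℝ)+1) * Real.sqrt π * Gamma ((n:ℝ)/2 + 1)) := this
    _ = Real.sqrt ((n:ℝ)+1) * Real.sqrt π ^ (n+1) * Gamma ((n:ℝ)/2 + 1) := by ring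

lemma vol_cb (n : ℕ) (x : EuclideanSpace ℝ (Fin n)) (r : ℝ) (hr : 0 ≤ r) :
    volume (Metric.closedBall x r) = ENNReal.ofReal (uBV n * r^n) := by
  rcases Nat.eq_zero_or_pos n with rfl | hn
  · rw [volume_euclideanSpace_eq_dirac, Measure.dirac_apply' _ measurableSet_closedBall]
    have h0 : (0 : EuclideanSpace ℝ (Fin 0)) ∈ Metric.closedBall x r := by
      simp [Metric.mem_closedBall]
      have : x = 0 := Subsingleton.elim x 0
      simp [this, hr]
    rw [Set.indicator_of_mem h0]
    simp [uBV, Gamma_one]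
  · haveI : Nonempty (Fin n) := ⟨⟨0, hn⟩⟩
    rw [EuclideanSpace.volume_closedBall (Fin n) x r]
    simp only [Fintype.card_fin]
    rw [← ENNReal.ofReal_pow hr, ← ENNReal.ofReal_mul (by positivity)]
    rw [mul_comm, uBV]

lemma sqrt_le_iff' {x y : ℝ} (hy : 0 ≤ y) : Real.sqrt x ≤ y ↔ x ≤ y^2 := by
  rw [show y = Real.sqrt (y^2) by rw [Real.sqrt_sq hy]]
  rw [Real.sqrt_le_sqrt_iff (by positivity), Real.sqrt_sq hy]

lemma slice_bound {r δ q : ℝ} (hr : 0 < r) (hδ : 0 < δ) (hq : 0 ≤ q) :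
    volume {t : ℝ | t^2 + q ≤ r^2 ∧ ¬((t - δ)^2 + q ≤ r^2)} ≤ ENNReal.ofReal δ := by
  rcases le_or_gt q (r^2) with hqr | hqr
  · set c := Real.sqrt (r^2 - q) with hc
    have hc0 : 0 ≤ c := Real.sqrt_nonneg _
    have hc2 : c^2 = r^2 - q := Real.sq_sqrt (by linarith)
    have hsub : {t : ℝ | t^2 + q ≤ r^2 ∧ ¬((t - δ)^2 + q ≤ r^2)} ⊆ Set.Ico (-c) (δ - c) := by
      intro t ⟨h1, h2⟩
      have ht2 : t^2 ≤ c^2 := by linarith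
      have htc : -c ≤ t ∧ t ≤ c := by constructor <;> nlinarith
      constructor
      · exact htc.1
      · by_contra hlt
        push_neg at hlt
        apply h2
        have : (t - δ)^2 ≤ c^2 := by nlinarith [htc.2]
        linarith
    calc volume _ ≤ volume (Set.Ico (-c) (δ - c)) := measure_mono hsub
      _ = ENNReal.ofReal (δ - c - (-c)) := Real.volume_Ico
      _ = ENNReal.ofReal δ := by ring_nf
  · have : {t : ℝ | t^2 + q ≤ r^2 ∧ ¬((t - δ)^2 + q ≤ r^2)} = ∅ := by
      ext t; simp only [Set.mem_setOf_eq, Set.mem_empty_iff_false, iff_false, not_and]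
      intro h1; nlinarith
    rw [this]
    simp

lemma norm_le_iff_sum_sq {m : ℕ} {y : EuclideanSpace ℝ (Fin m)} {r : ℝ} (hr : 0 ≤ r) :
    ‖y‖ ≤ r ↔ ∑ i, (y i)^2 ≤ r^2 := by
  rw [EuclideanSpace.norm_eq, sqrt_le_iff' hr]
  simp [sq_abs]

lemma vol_diff_le {n : ℕ} {r : ℝ} (hr : 0 < r) (u v : EuclideanSpace ℝ (Fin (n+1))) :
    volume (closedBall u r \ closedBall v r) ≤
      ENNReal.ofReal ‖u - v‖ * volume (closedBall (0 : EuclideanSpace ℝ (Fin n)) r) := by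
  rcases eq_or_ne u v with rfl | huv
  · simp
  set δ := ‖v - u‖ with hδdef
  have hδ : 0 < δ := by
    rw [hδdef, norm_pos_iff, sub_ne_zero]; exact (Ne.symm huv)
  set w : EuclideanSpace ℝ (Fin (n+1)) := δ • EuclideanSpace.single (0 : Fin (n+1)) (1:ℝ)
    with hwdef
  have hw : ‖w‖ = δ := by
    rw [hwdef, norm_smul, EuclideanSpace.norm_single]
    simp [abs_of_pos hδ]
  set T := Submodule.reflection (ℝ ∙ ((v - u) - w))ᗮ with hTdef
  have hT : T (v - u) = w := Submodule.reflection_sub hw.symm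
  set φ := fun x => T (x + -u) with hφdef
  have hmp : MeasurePreserving φ volume volume :=
    T.measurePreserving.comp (measurePreserving_add_right volume (-u))
  have hpre : φ ⁻¹' (closedBall 0 r \ closedBall w r) = closedBall u r \ closedBall v r := by
    ext x
    simp only [hφdef, Set.mem_preimage, Set.mem_diff, mem_closedBall, dist_eq_norm, sub_zero]
    have e1 : ‖T (x + -u)‖ = ‖x - u‖ := by rw [T.norm_map, sub_eq_add_neg]
    have e2 : ‖T (x + -u) - w‖ = ‖x - v‖ := by
      rw [← hT, ← map_sub, T.norm_map]
      congr 1; abel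
    rw [e1, e2]
  have hA : volume (closedBall u r \ closedBall v r) =
      volume (closedBall (0:EuclideanSpace ℝ (Fin (n+1))) r \ closedBall w r) := by
    rw [← hpre]
    exact hmp.measure_preimage
      (measurableSet_closedBall.diff measurableSet_closedBall).nullMeasurableSet
  set Ψ := (MeasurableEquiv.toLp 2 (Fin (n+1) → ℝ)).symm with hΨdef
  set P := MeasurableEquiv.piFinSuccAbove (fun _ : Fin (n+1) => ℝ) 0 with hPdef
  have hΘ : MeasurePreserving (fun x : EuclideanSpace ℝ (Fin (n+1)) => P (Ψ x))
      volume volume :=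
    (volume_preserving_piFinSuccAbove (fun _ : Fin (n+1) => ℝ) 0).comp
      (EuclideanSpace.volume_preserving_symm_measurableEquiv_toLp (Fin (n+1)))
  set C : Set (ℝ × (Fin n → ℝ)) :=
    {p | p.1^2 + ∑ i, (p.2 i)^2 ≤ r^2 ∧ ¬((p.1 - δ)^2 + ∑ i, (p.2 i)^2 ≤ r^2)} with hCdef
  have hmeas1 : Measurable fun p : ℝ × (Fin n → ℝ) => p.1^2 + ∑ i, (p.2 i)^2 := by
    fun_prop
  have hmeas2 : Measurable fun p : ℝ × (Fin n → ℝ) => (p.1 - δ)^2 + ∑ i, (p.2 i)^2 := by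
    fun_prop
  have hC : MeasurableSet C := by
    have : C = {p : ℝ × (Fin n → ℝ) | p.1^2 + ∑ i, (p.2 i)^2 ≤ r^2} ∩
        {p : ℝ × (Fin n → ℝ) | (p.1 - δ)^2 + ∑ i, (p.2 i)^2 ≤ r^2}ᶜ := rfl
    rw [this]
    exact (measurableSet_le hmeas1 measurable_const).inter
      (measurableSet_le hmeas2 measurable_const).compl
  have hwcoord0 : w 0 = δ := by
    simp [hwdef, EuclideanSpace.single_apply]
  have hwcoords : ∀ i : Fin n, w i.succ = 0 := by
    intro i
    simp [hwdef, EuclideanSpace.single_apply, Fin.succ_ne_zero]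
  have hpre2 : (fun x : EuclideanSpace ℝ (Fin (n+1)) => P (Ψ x)) ⁻¹' C =
      closedBall (0:EuclideanSpace ℝ (Fin (n+1))) r \ closedBall w r := by
    ext y
    have hPy : P (Ψ y) = (y 0, fun j : Fin n => y ((0 : Fin (n+1)).succAbove j)) := rfl
    simp only [Set.mem_preimage, hPy, Set.mem_diff, mem_closedBall, dist_eq_norm, sub_zero,
      hCdef, Set.mem_setOf_eq, Fin.succAbove_zero]
    rw [norm_le_iff_sum_sq hr.le, norm_le_iff_sum_sq hr.le (y := y - w),
      Fin.sum_univ_succ, Fin.sum_univ_succ]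
    have : ∀ i : Fin (n+1), (y - w) i = y i - w i := fun i => rfl
    simp only [this, hwcoord0, hwcoords, sub_zero]
  have hB : volume (closedBall (0:EuclideanSpace ℝ (Fin (n+1))) r \ closedBall w r) =
      volume C := by
    rw [← hpre2]
    exact hΘ.measure_preimage hC.nullMeasurableSet
  set s : Set (Fin n → ℝ) := {y | ∑ i, (y i)^2 ≤ r^2} with hsdef
  have hs : MeasurableSet s := measurableSet_le (by fun_prop) measurable_const
  have hCs : volume C ≤ ENNReal.ofReal δ * volume s := by
    rw [MeasureTheory.Measure.volume_eq_prod, Measure.prod_apply_symm hC]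
    have hb : ∀ y : Fin n → ℝ,
        volume ((fun t => (t, y)) ⁻¹' C) ≤ s.indicator (fun _ => ENNReal.ofReal δ) y := by
      intro y
      have hq : (0:ℝ) ≤ ∑ i, (y i)^2 := by positivity
      have hslice : (fun t => (t, y)) ⁻¹' C =
          {t : ℝ | t^2 + ∑ i, (y i)^2 ≤ r^2 ∧ ¬((t - δ)^2 + ∑ i, (y i)^2 ≤ r^2)} := rfl
      by_cases hy : y ∈ s
      · rw [Set.indicator_of_mem hy, hslice]
        exact slice_bound hr hδ hq
      · rw [Set.indicator_of_notMem hy]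
        have : (fun t => (t, y)) ⁻¹' C = ∅ := by
          rw [hslice]
          ext t
          simp only [Set.mem_setOf_eq, Set.mem_empty_iff_false, iff_false, not_and]
          intro h1
          exfalso
          apply hy
          rw [hsdef, Set.mem_setOf_eq]
          nlinarith
        rw [this, measure_empty]
    calc ∫⁻ y, volume ((fun t => (t, y)) ⁻¹' C) ≤
        ∫⁻ y, s.indicator (fun _ => ENNReal.ofReal δ) y := lintegral_mono hb
      _ = ENNReal.ofReal δ * volume s := by
        rw [lintegral_indicator hs, setLIntegral_const]
  have hsvol : volume s = volume (closedBall (0 : EuclideanSpace ℝ (Fin n)) r) := by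
    have := (EuclideanSpace.volume_preserving_symm_measurableEquiv_toLp (Fin n)).measure_preimage
      hs.nullMeasurableSet
    rw [← this]
    congr 1
    ext y
    simp only [Set.mem_preimage, hsdef, Set.mem_setOf_eq, mem_closedBall, dist_eq_norm, sub_zero]
    rw [norm_le_iff_sum_sq hr.le]
    rfl
  have hδeq : δ = ‖u - v‖ := norm_sub_rev v u
  rw [hA, hB, ← hδeq, ← hsvol]
  exact hCs

lemma subgrad {d : ℕ} {ℓ : EuclideanSpace ℝ (Fin d) → ℝ} (hconv : ConvexOn ℝ Set.univ ℓ)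
    {a : EuclideanSpace ℝ (Fin d)} (ha : DifferentiableAt ℝ ℓ a) (b : EuclideanSpace ℝ (Fin d)) :
    ⟪gradient ℓ a, b - a⟫ ≤ ℓ b - ℓ a := by
  set φ : ℝ → ℝ := fun t => ℓ (a + t • (b - a)) with hφdef
  have hφconv : ConvexOn ℝ Set.univ φ := by
    have := hconv.comp_affineMap (AffineMap.lineMap a b)
    have heq : ∀ t : ℝ, (ℓ ∘ (AffineMap.lineMap a b)) t = φ t := by
      intro t
      simp [hφdef, AffineMap.lineMap_apply, Function.comp]
      congr 1
      abel
    have hpre : (AffineMap.lineMap a b : ℝ →ᵃ[ℝ] EuclideanSpace ℝ (Fin d)) ⁻¹' Set.univ =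
        Set.univ := by simp
    rw [hpre] at this
    exact this.congr (fun x _ => heq x)
  have h1 : HasDerivAt (fun t : ℝ => a + t • (b - a)) (b - a) 0 := by
    simpa using ((hasDerivAt_id (0:ℝ)).smul_const (b - a)).const_add a
  have h2 : HasDerivAt φ (fderiv ℝ ℓ a (b - a)) 0 := by
    have ha' : HasFDerivAt ℓ (fderiv ℝ ℓ a) (a + (0:ℝ) • (b - a)) := by
      simpa using ha.hasFDerivAt
    have := ha'.comp_hasDerivAt 0 h1
    exact this
  have h3 : fderiv ℝ ℓ a (b - a) = ⟪gradient ℓ a, b - a⟫ := by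
    rw [ha.hasGradientAt.hasFDerivAt.fderiv]
    exact InnerProductSpace.toDual_apply_apply
  rw [h3] at h2
  have key := hφconv.le_slope_of_hasDerivAt (Set.mem_univ (0:ℝ)) (Set.mem_univ 1) zero_lt_one h2
  have : slope φ 0 1 = ℓ b - ℓ a := by
    rw [slope_def_field]
    simp [hφdef]
  rwa [this] at key

end Stmt9Aux

open Stmt9Aux Metric Real
open scoped RealInnerProductSpace

theorem stmt9 {d : ℕ} (ℓ : EuclideanSpace ℝ (Fin d) → ℝ) (G : ℝ) (hG : 0 ≤ G)
    (hconv : ConvexOn ℝ Set.univ ℓ)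
    (hlip : ∀ u v, |ℓ u - ℓ v| ≤ G * ‖u - v‖)
    (r : ℝ) (hr : 0 < r) :
    Differentiable ℝ (smoothed ℓ r) ∧
    ∀ u v, ‖gradient (smoothed ℓ r) u - gradient (smoothed ℓ r) v‖ ≤
      G * Real.sqrt d / r * ‖u - v‖ := by
  rcases Nat.eq_zero_or_pos d with hd0 | hdpos
  · subst hd0
    haveI : Subsingleton (EuclideanSpace ℝ (Fin 0)) :=
      ⟨fun a b => by ext i; exact i.elim0⟩
    constructor
    · have : smoothed ℓ r = fun _ => smoothed ℓ r 0 :=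
        funext fun z => by rw [Subsingleton.elim z 0]
      rw [this]; exact differentiable_const _
    · intro u v
      rw [Subsingleton.elim u v]
      simp
  obtain ⟨n, rfl⟩ : ∃ n, d = n + 1 := ⟨d - 1, (Nat.succ_pred_eq_of_pos hdpos).symm⟩
  set μ := uniformBall (n+1) r with hμdef
  set B := closedBall (0 : EuclideanSpace ℝ (Fin (n+1))) r with hBdef
  have hV : volume B = ENNReal.ofReal (uBV (n+1) * r ^ (n+1)) := vol_cb (n+1) 0 r hr.le
  have hVR : (0:ℝ) < uBV (n+1) * r ^ (n+1) := by
    have := uBV_pos (n+1); positivity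
  have hV0 : volume B ≠ 0 := by rw [hV]; exact (ENNReal.ofReal_pos.2 hVR).ne'
  have hVtop : volume B ≠ ⊤ := by rw [hV]; exact ENNReal.ofReal_ne_top
  set c := (volume B).toReal⁻¹ with hcdef
  have hcD : c = (uBV (n+1) * r ^ (n+1))⁻¹ := by
    rw [hcdef, hV, ENNReal.toReal_ofReal hVR.le]
  have hc_nonneg : 0 ≤ c := by rw [hcD]; positivity
  -- Lipschitz structure
  have hlipW : LipschitzWith G.toNNReal ℓ := by
    apply LipschitzWith.of_dist_le_mul
    intro x y
    rw [Real.dist_eq, dist_eq_norm]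
    calc |ℓ x - ℓ y| ≤ G * ‖x - y‖ := hlip x y
      _ = (G.toNNReal : ℝ) * ‖x - y‖ := by rw [Real.coe_toNNReal G hG]
  have hgb : ∀ x, ‖gradient ℓ x‖ ≤ G := by
    intro x
    have h1 : ‖fderiv ℝ ℓ x‖ ≤ (G.toNNReal:ℝ) := norm_fderiv_le_of_lipschitz ℝ hlipW
    rw [gradient, LinearIsometryEquiv.norm_map]
    rwa [Real.coe_toNNReal G hG] at h1
  have hgmeas : Measurable (gradient ℓ) := by
    have h1 : Measurable (fderiv ℝ ℓ) := measurable_fderiv ℝ ℓ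
    exact ((InnerProductSpace.toDual ℝ _).symm.continuous.measurable).comp h1
  have hgint : ∀ u : EuclideanSpace ℝ (Fin (n+1)),
      IntegrableOn (gradient ℓ) (closedBall u r) volume := by
    intro u
    haveI : IsFiniteMeasure (volume.restrict (closedBall u r)) := ⟨by
      rw [Measure.restrict_apply_univ]; exact measure_closedBall_lt_top⟩
    exact Integrable.mono' (integrable_const G)
      (hgmeas.aestronglyMeasurable.restrict)
      (Filter.Eventually.of_forall fun x => hgb x)
  set g := fun θ : EuclideanSpace ℝ (Fin (n+1)) =>
      c • ∫ z in closedBall θ r, gradient ℓ z with hgdef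
  have hcastd : ((n + 1 : ℕ) : ℝ) = (n : ℝ) + 1 := by push_cast; ring
  set L := G * Real.sqrt ((n + 1 : ℕ) : ℝ) / r with hLdef
  have hLnn : 0 ≤ L := by
    rw [hLdef]; positivity
  -- Lipschitz bound on g
  have hgLip : ∀ u v, ‖g u - g v‖ ≤ L * ‖u - v‖ := by
    intro u v
    have hsplit : ∀ a b : EuclideanSpace ℝ (Fin (n+1)),
        ∫ z in closedBall a r, gradient ℓ z =
        (∫ z in closedBall a r ∩ closedBall b r, gradient ℓ z) +
          ∫ z in closedBall a r \ closedBall b r, gradient ℓ z :=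
      fun a b => (integral_inter_add_diff measurableSet_closedBall (hgint a)).symm
    have hnorm : ∀ a b : EuclideanSpace ℝ (Fin (n+1)),
        ‖∫ z in closedBall a r \ closedBall b r, gradient ℓ z‖ ≤
          G * (‖a - b‖ * (uBV n * r ^ n)) := by
      intro a b
      have hm : volume (closedBall a r \ closedBall b r) < ⊤ :=
        lt_of_le_of_lt (measure_mono Set.diff_subset) measure_closedBall_lt_top
      have hbound := norm_setIntegral_le_of_norm_le_const hm
        (fun x (_ : x ∈ closedBall a r \ closedBall b r) => hgb x)
      refine hbound.trans ?_
      have h1 : volume (closedBall a r \ closedBall b r) ≤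
          ENNReal.ofReal (‖a - b‖ * (uBV n * r^n)) := by
        have h2 := vol_diff_le hr a b
        rw [vol_cb n 0 r hr.le] at h2
        refine h2.trans_eq ?_
        rw [← ENNReal.ofReal_mul (norm_nonneg _)]
      have h2 : (volume (closedBall a r \ closedBall b r)).toReal ≤
          ‖a - b‖ * (uBV n * r^n) :=
        ENNReal.toReal_le_of_le_ofReal (mul_nonneg (norm_nonneg _) (mul_nonneg (uBV_pos n).le (pow_nonneg hr.le n))) h1
      exact mul_le_mul_of_nonneg_left h2 hG
    have hdiff : g u - g v = c • ((∫ z in closedBall u r \ closedBall v r, gradient ℓ z) -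
        ∫ z in closedBall v r \ closedBall u r, gradient ℓ z) := by
      rw [hgdef]
      simp only []
      rw [← smul_sub]
      congr 1
      rw [hsplit u v, hsplit v u, Set.inter_comm]
      abel
    rw [hdiff, norm_smul, Real.norm_eq_abs, abs_of_nonneg hc_nonneg]
    have hns : ‖(∫ z in closedBall u r \ closedBall v r, gradient ℓ z) -
        ∫ z in closedBall v r \ closedBall u r, gradient ℓ z‖ ≤
        G * (‖u - v‖ * (uBV n * r^n)) + G * (‖u - v‖ * (uBV n * r^n)) := by
      refine (norm_sub_le _ _).trans ?_
      have := hnorm u v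
      have h2 := hnorm v u
      rw [norm_sub_rev v u] at h2
      linarith
    have hmul := mul_le_mul_of_nonneg_left hns hc_nonneg
    refine le_trans hmul ?_
    -- arithmetic
    have hstep : 2 * (uBV n * r^n) ≤ Real.sqrt ((n:ℝ)+1) * uBV (n+1) * r^n := by
      have := mul_le_mul_of_nonneg_right (two_uBV_le n) (by positivity : (0:ℝ) ≤ r^n)
      calc 2 * (uBV n * r^n) = 2 * uBV n * r^n := by ring
        _ ≤ Real.sqrt ((n:ℝ)+1) * uBV (n+1) * r^n := this
    have hkey : c * (2 * (uBV n * r^n)) ≤ Real.sqrt ((n:ℝ)+1) / r := by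
      rw [hcD, inv_mul_le_iff₀ hVR]
      calc 2 * (uBV n * r^n) ≤ Real.sqrt ((n:ℝ)+1) * uBV (n+1) * r^n := hstep
        _ = uBV (n+1) * r^(n+1) * (Real.sqrt ((n:ℝ)+1) / r) := by
            rw [pow_succ]
            field_simp
    calc c * (G * (‖u - v‖ * (uBV n * r^n)) + G * (‖u - v‖ * (uBV n * r^n)))
        = (G * ‖u - v‖) * (c * (2 * (uBV n * r^n))) := by ring
      _ ≤ (G * ‖u - v‖) * (Real.sqrt ((n:ℝ)+1) / r) := by
          apply mul_le_mul_of_nonneg_left hkey (by positivity)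
      _ = L * ‖u - v‖ := by rw [hLdef, hcastd]; ring
  -- integrability facts
  have hcontℓ : Continuous ℓ := hlipW.continuous
  have hinvtop : (volume B)⁻¹ ≠ ⊤ := ENNReal.inv_ne_top.2 hV0
  have hℓint : ∀ a : EuclideanSpace ℝ (Fin (n+1)), Integrable (fun y => ℓ (a + y)) μ := by
    intro a
    rw [hμdef, uniformBall]
    refine Integrable.smul_measure ?_ hinvtop
    exact ((hcontℓ.comp (continuous_const.add continuous_id)).continuousOn).integrableOn_compact
      (isCompact_closedBall 0 r)
  have hgintμ : ∀ a : EuclideanSpace ℝ (Fin (n+1)),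
      Integrable (fun y => gradient ℓ (a + y)) μ := by
    intro a
    rw [hμdef, uniformBall]
    refine Integrable.smul_measure ?_ hinvtop
    haveI : IsFiniteMeasure (volume.restrict B) := ⟨by
      rw [Measure.restrict_apply_univ]; exact measure_closedBall_lt_top⟩
    exact Integrable.mono' (integrable_const G)
      ((hgmeas.comp (measurable_const_add a)).aestronglyMeasurable)
      (Filter.Eventually.of_forall fun x => hgb _)
  -- shift identity
  have hshift : ∀ a : EuclideanSpace ℝ (Fin (n+1)),
      ∫ y, gradient ℓ (a + y) ∂μ = g a := by
    intro a
    have hmapr : Measure.map (fun y : EuclideanSpace ℝ (Fin (n+1)) => a + y)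
        (volume.restrict B) = volume.restrict (closedBall a r) := by
      have hpre : B = (fun y : EuclideanSpace ℝ (Fin (n+1)) => a + y) ⁻¹' (closedBall a r) := by
        ext y
        simp only [hBdef, Set.mem_preimage, mem_closedBall, dist_eq_norm, sub_zero]
        rw [show a + y - a = y by abel]
      rw [hpre, ← Measure.restrict_map (measurable_const_add a) measurableSet_closedBall,
        map_add_left_eq_self]
    rw [hμdef, uniformBall, integral_smul_measure]
    rw [show ∫ y, gradient ℓ (a + y) ∂(volume.restrict B) =
        ∫ z, gradient ℓ z ∂(Measure.map (fun y => a + y) (volume.restrict B)) by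
      rw [integral_map (measurable_const_add a).aemeasurable
        (hgmeas.aestronglyMeasurable.mono_measure le_rfl |>.mono_ac
          Measure.AbsolutelyContinuous.rfl)]]
    rw [hmapr, hgdef, ENNReal.toReal_inv]
  -- a.e. differentiability
  have hae : ∀ θ : EuclideanSpace ℝ (Fin (n+1)), ∀ᵐ y ∂μ, DifferentiableAt ℝ ℓ (θ + y) := by
    intro θ
    have h0 : ∀ᵐ x ∂(volume : Measure (EuclideanSpace ℝ (Fin (n+1)))),
        DifferentiableAt ℝ ℓ x := hlipW.ae_differentiableAt
    have hAm : MeasurableSet {x : EuclideanSpace ℝ (Fin (n+1)) | ¬ DifferentiableAt ℝ ℓ x} :=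
      (measurableSet_of_differentiableAt ℝ ℓ).compl
    have hvol : volume ((fun y : EuclideanSpace ℝ (Fin (n+1)) => θ + y) ⁻¹'
        {x | ¬ DifferentiableAt ℝ ℓ x}) = 0 := by
      rw [(measurePreserving_add_left volume θ).measure_preimage hAm.nullMeasurableSet]
      rwa [ae_iff] at h0
    have hpm : MeasurableSet ((fun y : EuclideanSpace ℝ (Fin (n+1)) => θ + y) ⁻¹'
        {x | ¬ DifferentiableAt ℝ ℓ x}) := hAm.preimage (measurable_const_add θ)
    rw [ae_iff]
    have hset : {y : EuclideanSpace ℝ (Fin (n+1)) | ¬ DifferentiableAt ℝ ℓ (θ + y)} =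
        (fun y : EuclideanSpace ℝ (Fin (n+1)) => θ + y) ⁻¹'
          {x | ¬ DifferentiableAt ℝ ℓ x} := rfl
    rw [hset, hμdef, uniformBall, Measure.smul_apply, Measure.restrict_apply hpm]
    have : volume (((fun y : EuclideanSpace ℝ (Fin (n+1)) => θ + y) ⁻¹'
        {x | ¬ DifferentiableAt ℝ ℓ x}) ∩ B) = 0 :=
      le_antisymm ((measure_mono Set.inter_subset_left).trans hvol.le) (zero_le)
    rw [this, smul_zero]
  -- sandwich bounds
  have hlow : ∀ θ h : EuclideanSpace ℝ (Fin (n+1)),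
      ⟪g θ, h⟫ ≤ smoothed ℓ r (θ + h) - smoothed ℓ r θ := by
    intro θ h
    have hdiffi : smoothed ℓ r (θ + h) - smoothed ℓ r θ =
        ∫ y, (ℓ (θ + h + y) - ℓ (θ + y)) ∂μ := by
      rw [show smoothed ℓ r (θ + h) = ∫ y, ℓ (θ + h + y) ∂μ from rfl,
        show smoothed ℓ r θ = ∫ y, ℓ (θ + y) ∂μ from rfl,
        ← integral_sub (hℓint (θ+h)) (hℓint θ)]
    have hinner : ∫ y, ⟪gradient ℓ (θ + y), h⟫ ∂μ = ⟪g θ, h⟫ := by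
      calc ∫ y, ⟪gradient ℓ (θ + y), h⟫ ∂μ = ∫ y, ⟪h, gradient ℓ (θ + y)⟫ ∂μ := by
            simp_rw [real_inner_comm]
        _ = ⟪h, ∫ y, gradient ℓ (θ + y) ∂μ⟫ := integral_inner (hgintμ θ) h
        _ = ⟪g θ, h⟫ := by rw [hshift θ, real_inner_comm]
    rw [hdiffi, ← hinner]
    apply integral_mono_ae ((hgintμ θ).inner_const h) ((hℓint (θ+h)).sub (hℓint θ))
    filter_upwards [hae θ] with y hy
    have := subgrad hconv hy (θ + h + y)
    simpa [show θ + h + y - (θ + y) = h by abel] using this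
  have hup : ∀ θ h : EuclideanSpace ℝ (Fin (n+1)),
      smoothed ℓ r (θ + h) - smoothed ℓ r θ ≤ ⟪g (θ + h), h⟫ := by
    intro θ h
    have hdiffi : smoothed ℓ r (θ + h) - smoothed ℓ r θ =
        ∫ y, (ℓ (θ + h + y) - ℓ (θ + y)) ∂μ := by
      rw [show smoothed ℓ r (θ + h) = ∫ y, ℓ (θ + h + y) ∂μ from rfl,
        show smoothed ℓ r θ = ∫ y, ℓ (θ + y) ∂μ from rfl,
        ← integral_sub (hℓint (θ+h)) (hℓint θ)]
    have hinner : ∫ y, ⟪gradient ℓ (θ + h + y), h⟫ ∂μ = ⟪g (θ + h), h⟫ := by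
      calc ∫ y, ⟪gradient ℓ (θ + h + y), h⟫ ∂μ
          = ∫ y, ⟪h, gradient ℓ ((θ + h) + y)⟫ ∂μ := by
            simp_rw [real_inner_comm]
        _ = ⟪h, ∫ y, gradient ℓ ((θ + h) + y) ∂μ⟫ := integral_inner (hgintμ (θ + h)) h
        _ = ⟪g (θ + h), h⟫ := by rw [hshift (θ + h), real_inner_comm]
    rw [hdiffi, ← hinner]
    apply integral_mono_ae ((hℓint (θ+h)).sub (hℓint θ)) ((hgintμ (θ+h)).inner_const h)
    filter_upwards [hae (θ + h)] with y hy
    have := subgrad hconv hy (θ + y)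
    have he : θ + y - (θ + h + y) = -h := by abel
    rw [he, inner_neg_right] at this
    simp only [Pi.sub_apply]
    linarith
  -- differentiability
  have hHG : ∀ θ, HasGradientAt (smoothed ℓ r) (g θ) θ := by
    intro θ
    rw [hasGradientAt_iff_hasFDerivAt, hasFDerivAt_iff_isLittleO_nhds_zero]
    have hbound : ∀ h : EuclideanSpace ℝ (Fin (n+1)),
        ‖smoothed ℓ r (θ + h) - smoothed ℓ r θ -
          (InnerProductSpace.toDual ℝ _ (g θ)) h‖ ≤ (L * ‖h‖) * ‖h‖ := by
      intro h
      have e : (InnerProductSpace.toDual ℝ _ (g θ)) h = ⟪g θ, h⟫ :=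
        InnerProductSpace.toDual_apply_apply
      rw [e]
      have h1 := hlow θ h
      have h2 := hup θ h
      have h3 : ⟪g (θ+h), h⟫ - ⟪g θ, h⟫ ≤ ‖g (θ+h) - g θ‖ * ‖h‖ := by
        rw [← inner_sub_left]
        exact real_inner_le_norm _ _
      have h4 : ‖g (θ+h) - g θ‖ ≤ L * ‖h‖ := by
        have := hgLip (θ+h) θ
        rwa [show θ + h - θ = h by abel] at this
      have h5 : ‖g (θ+h) - g θ‖ * ‖h‖ ≤ (L * ‖h‖) * ‖h‖ :=
        mul_le_mul_of_nonneg_right h4 (norm_nonneg h)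
      rw [Real.norm_eq_abs, abs_of_nonneg (by linarith)]
      linarith
    rw [Asymptotics.isLittleO_iff]
    intro ε hε
    have htend : Filter.Tendsto (fun h : EuclideanSpace ℝ (Fin (n+1)) => L * ‖h‖)
        (nhds 0) (nhds 0) := by
      have : Filter.Tendsto (fun h : EuclideanSpace ℝ (Fin (n+1)) => ‖h‖)
          (nhds 0) (nhds 0) := by
        simpa using continuous_norm.tendsto (0 : EuclideanSpace ℝ (Fin (n+1)))
      simpa using this.const_mul L
    filter_upwards [htend.eventually_lt_const hε] with h hh
    calc ‖smoothed ℓ r (θ + h) - smoothed ℓ r θ - (InnerProductSpace.toDual ℝ _ (g θ)) h‖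
        ≤ (L * ‖h‖) * ‖h‖ := hbound h
      _ ≤ ε * ‖h‖ := mul_le_mul_of_nonneg_right hh.le (norm_nonneg h)
  refine ⟨fun θ => (hHG θ).differentiableAt, ?_⟩
  intro u v
  rw [(hHG u).gradient, (hHG v).gradient]
  exact hgLip u v
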